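/- Let G be a finitely generated group of orientation-preserving homeomorphisms of [0,1], each of which restricts to a real-analytic function on (0,1), and suppose no point of (0,1) is fixed by every element of G. Let z ∈ (0,1), and let I₀ = (p, q) be a connected component of (0,1) ∖ closure(O(z)) with p, q ∈ (0,1). Suppose x ∈ I₀ is such that O(x) ∩ I₀ is an infinite subset of I₀ whose set of accumulation points is exactly {p, q}. Then for every y ∈ I₀ ∖ O(x) and every connected component J of I₀ ∖ O(x), the set O(y) ∩ J contains exactly one point; in particular, every orbit meeting I₀ and distinct from O(x) is parallel to O(x) in I₀. -/

import Mathlib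

open Set Topology Filter

/-- Orientation-preserving homeomorphisms of `[0,1]`, i.e. increasing homeomorphisms of
`[0,1]` onto itself, are exactly the order isomorphisms of the unit interval
(an increasing bijection of `[0,1]` is automatically a homeomorphism). -/
abbrev IntervalHomeo := unitInterval ≃o unitInterval

/-- The `G`-orbit of a point `x`. -/
def orbit (G : Subgroup IntervalHomeo) (x : unitInterval) : Set unitInterval :=
  {y | ∃ g ∈ G, g x = y}

/-- A set `M` is `G`-invariant if `g(M) = M` for every `g ∈ G`. -/
def Invariant (G : Subgroup IntervalHomeo) (M : Set unitInterval) : Prop :=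
  ∀ g ∈ G, ⇑(g : IntervalHomeo) '' M = M

/-- The open interval `(0,1)` inside `[0,1]`. -/
def openI : Set unitInterval := {x | (x : ℝ) ∈ Set.Ioo (0 : ℝ) 1}

/-- `M` is contained in `S` and closed in the subspace topology of `S`. -/
def ClosedIn (S M : Set unitInterval) : Prop := M ⊆ S ∧ closure M ∩ S ⊆ M

lemma orbit_image {G : Subgroup IntervalHomeo} {g : IntervalHomeo} (hg : g ∈ G) (t : unitInterval) :
    ⇑g '' orbit G t = orbit G t := by
  ext u
  constructor
  · rintro ⟨v, ⟨k, hk, rfl⟩, rfl⟩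
    exact ⟨g * k, mul_mem hg hk, rfl⟩
  · rintro ⟨k, hk, rfl⟩
    exact ⟨(g⁻¹ * k) t, ⟨g⁻¹ * k, mul_mem (inv_mem hg) hk, rfl⟩, g.apply_symm_apply (k t)⟩

lemma closure_orbit_image {G : Subgroup IntervalHomeo} {g : IntervalHomeo} (hg : g ∈ G)
    (t : unitInterval) : ⇑g '' closure (orbit G t) = closure (orbit G t) := by
  calc ⇑g '' closure (orbit G t) = closure (⇑g '' orbit G t) :=
        g.toHomeomorph.image_closure (orbit G t)
    _ = closure (orbit G t) := by rw [orbit_image hg]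

/-- If `g` maps some point of the gap `(p,q)` into `(p,q)`, then `g` fixes `p` and `q`. -/
lemma gap_rigid {G : Subgroup IntervalHomeo} {z p q : unitInterval}
    (hIdisj : Set.Ioo p q ∩ closure (orbit G z) = ∅)
    (hpz : p ∈ closure (orbit G z)) (hqz : q ∈ closure (orbit G z))
    {g : IntervalHomeo} (hg : g ∈ G) {t : unitInterval} (ht : t ∈ Set.Ioo p q)
    (hgt : g t ∈ Set.Ioo p q) : g p = p ∧ g q = q := by
  set Λ := closure (orbit G z) with hΛ
  have himg : ⇑g '' Λ = Λ := closure_orbit_image hg z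
  have hgpΛ : g p ∈ Λ := himg ▸ Set.mem_image_of_mem _ hpz
  have hgqΛ : g q ∈ Λ := himg ▸ Set.mem_image_of_mem _ hqz
  have hdisj2 : Set.Ioo (g p) (g q) ∩ Λ = ∅ := by
    rw [← OrderIso.image_Ioo, ← himg]
    rw [← Set.image_inter g.injective, hIdisj, Set.image_empty]
  have hgtmem : g t ∈ Set.Ioo (g p) (g q) := ⟨g.strictMono ht.1, g.strictMono ht.2⟩
  have hgp : g p = p := by
    rcases lt_trichotomy (g p) p with h | h | h
    · exfalso
      have : p ∈ Set.Ioo (g p) (g q) := ⟨h, lt_trans hgt.1 hgtmem.2⟩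
      exact absurd (hdisj2 ▸ Set.mem_inter this hpz) (Set.notMem_empty p)
    · exact h
    · exfalso
      have : g p ∈ Set.Ioo p q := ⟨h, lt_trans hgtmem.1 hgt.2⟩
      exact absurd (hIdisj ▸ Set.mem_inter this hgpΛ) (Set.notMem_empty (g p))
  have hgq : g q = q := by
    rcases lt_trichotomy (g q) q with h | h | h
    · exfalso
      have : g q ∈ Set.Ioo p q := ⟨lt_trans hgt.1 hgtmem.2, h⟩
      exact absurd (hIdisj ▸ Set.mem_inter this hgqΛ) (Set.notMem_empty (g q))
    · exact h
    · exfalso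
      have : q ∈ Set.Ioo (g p) (g q) := ⟨lt_trans hgtmem.1 hgt.2, h⟩
      exact absurd (hdisj2 ▸ Set.mem_inter this hqz) (Set.notMem_empty q)
  exact ⟨hgp, hgq⟩

/-- An order isomorphism of `[0,1]` agreeing with an analytic map on `(0,1)` and fixing a set
with an accumulation point inside `(0,1)` is the identity. -/
lemma eq_one_of_fix_acc {g : IntervalHomeo} {F : ℝ → ℝ}
    (hF : AnalyticOnNhd ℝ F (Set.Ioo (0 : ℝ) 1))
    (hFg : ∀ x : unitInterval, (x : ℝ) ∈ Set.Ioo (0 : ℝ) 1 → ((g x : unitInterval) : ℝ) = F (x : ℝ))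
    {T : Set unitInterval} (hTfix : ∀ t ∈ T, g t = t)
    (hTsub : ∀ t ∈ T, (t : ℝ) ∈ Set.Ioo (0 : ℝ) 1)
    {r : unitInterval} (hr : (r : ℝ) ∈ Set.Ioo (0 : ℝ) 1) (hacc : AccPt r (𝓟 T)) :
    g = 1 := by
  have hmap : Filter.Tendsto (Subtype.val : unitInterval → ℝ) (𝓝[≠] r) (𝓝[≠] (r : ℝ)) := by
    apply tendsto_nhdsWithin_of_tendsto_nhds_of_eventually_within
    · exact continuous_subtype_val.continuousAt.tendsto.mono_left nhdsWithin_le_nhds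
    · filter_upwards [self_mem_nhdsWithin] with a ha
      exact fun h => ha (Subtype.ext h)
  have hfreq0 : ∃ᶠ t in 𝓝[≠] r, t ∈ T := by
    rw [frequently_nhdsWithin_iff]
    have := accPt_iff_frequently.mp hacc
    exact this.mono fun t ht => ⟨ht.2, ht.1⟩
  have hfreq : ∃ᶠ u in 𝓝[≠] (r : ℝ), F u = u := by
    apply hmap.frequently
    refine hfreq0.mono fun t ht => ?_
    have h1 := hFg t (hTsub t ht)
    rw [hTfix t ht] at h1
    exact h1.symm
  have hEq : Set.EqOn F id (Set.Ioo (0:ℝ) 1) :=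
    hF.eqOn_of_preconnected_of_frequently_eq analyticOnNhd_id isPreconnected_Ioo hr hfreq
  ext t
  rcases lt_or_eq_of_le t.2.1 with h0 | h0
  · rcases lt_or_eq_of_le t.2.2 with h1 | h1
    · show ((g t : unitInterval) : ℝ) = (t : ℝ)
      rw [hFg t ⟨h0, h1⟩]
      exact hEq ⟨h0, h1⟩
    · have htop : ∀ s : unitInterval, s ≤ t := fun s => by
        change (s:ℝ) ≤ (t:ℝ); rw [h1]; exact s.2.2
      have h2 : g t ≤ t := htop _
      have h3 : t ≤ g t := by
        have := g.monotone (htop (g.symm t))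
        rwa [g.apply_symm_apply] at this
      exact congrArg Subtype.val (le_antisymm h2 h3)
  · have hbot : ∀ s : unitInterval, t ≤ s := fun s => by
      change (t:ℝ) ≤ (s:ℝ); rw [← h0]; exact s.2.1
    have h2 : t ≤ g t := hbot _
    have h3 : g t ≤ t := by
      have := g.monotone (hbot (g.symm t))
      rwa [g.apply_symm_apply] at this
    exact congrArg Subtype.val (le_antisymm h3 h2)

/-- A fixed point of `g` is fixed by all integer powers of `g`. -/
lemma zpow_fix {g : IntervalHomeo} {r : unitInterval} (h : g r = r) (n : ℤ) : (g ^ n) r = r := by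
  have hinv : g⁻¹ r = r := by
    conv_lhs => rw [← h]
    exact g.symm_apply_apply r
  induction n using Int.induction_on with
  | zero => rfl
  | succ k ih =>
      rw [zpow_add_one]
      show (g ^ (k:ℤ)) (g r) = r
      rw [h, ih]
  | pred k ih =>
      rw [zpow_sub_one]
      show (g ^ (-k:ℤ)) (g⁻¹ r) = r
      rw [hinv, ih]

/-- A fixed point of `g` is fixed by `g⁻¹`. -/
lemma inv_fix {g : IntervalHomeo} {r : unitInterval} (h : g r = r) : g⁻¹ r = r := by
  conv_lhs => rw [← h]
  exact g.symm_apply_apply r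

/-- Let `G` be finitely generated, each element real-analytic on `(0,1)`,
with no global fixed point in `(0,1)`. Let `I₀ = (p,q)` be a connected component of
`(0,1) ∖ closure (O(z))` with `p, q ∈ (0,1)`, and suppose `x ∈ I₀` is such that
`O(x) ∩ I₀` is infinite with accumulation set exactly `{p, q}`. Then for every
`y ∈ I₀ ∖ O(x)` and every connected component `J` of `I₀ ∖ O(x)`, the set `O(y) ∩ J` is a
single point: every orbit meeting `I₀` other than `O(x)` is parallel to `O(x)` in `I₀`. -/
theorem stmt18 (G : Subgroup IntervalHomeo) (hfg : G.FG)
    (han : ∀ g ∈ G, ∃ F : ℝ → ℝ, AnalyticOnNhd ℝ F (Set.Ioo (0 : ℝ) 1) ∧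
      ∀ x : unitInterval, (x : ℝ) ∈ Set.Ioo (0 : ℝ) 1 → ((g x : unitInterval) : ℝ) = F (x : ℝ))
    (hnofix : ∀ x ∈ openI, ∃ g ∈ G, g x ≠ x)
    (z : unitInterval) (hz : z ∈ openI)
    (p q : unitInterval) (hp : p ∈ openI) (hq : q ∈ openI) (hpq : p < q)
    (hIdisj : Set.Ioo p q ∩ closure (orbit G z) = ∅)
    (hpz : p ∈ closure (orbit G z)) (hqz : q ∈ closure (orbit G z))
    (x : unitInterval) (hx : x ∈ Set.Ioo p q)
    (hxinf : (orbit G x ∩ Set.Ioo p q).Infinite)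
    (hxacc : {w | AccPt w (𝓟 (orbit G x ∩ Set.Ioo p q))} = {p, q}) :
    ∀ y ∈ Set.Ioo p q, y ∉ orbit G x →
      ∀ J : Set unitInterval,
        (∃ w ∈ Set.Ioo p q \ orbit G x,
          J = connectedComponentIn (Set.Ioo p q \ orbit G x) w) →
        ∃ w, orbit G y ∩ J = {w} := by
  haveI : Fact ((0:ℝ) ≤ 1) := ⟨zero_le_one⟩
  set S : Set unitInterval := orbit G x ∩ Set.Ioo p q with hS
  -- coordinates of points of (p,q) lie in (0,1)
  have h01 : ∀ t ∈ Set.Ioo p q, (t : ℝ) ∈ Set.Ioo (0:ℝ) 1 :=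
    fun t ht => ⟨lt_trans hp.1 ht.1, lt_trans ht.2 hq.2⟩
  -- p and q are accumulation points of S
  have haccp : AccPt p (𝓟 S) := by
    have : p ∈ ({p, q} : Set unitInterval) := Set.mem_insert _ _
    rw [← hxacc] at this; exact this
  have haccq : AccPt q (𝓟 S) := by
    have : q ∈ ({p, q} : Set unitInterval) := Set.mem_insert_of_mem _ rfl
    rw [← hxacc] at this; exact this
  -- local finiteness of S
  have hfin : ∀ a b : unitInterval, p < a → b < q → (S ∩ Set.Icc a b).Finite := by
    intro a b hpa hbq
    by_contra hinf
    rw [← Set.not_infinite, not_not] at hinf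
    obtain ⟨c, hc⟩ := hinf.exists_accPt_principal
    have hcS : AccPt c (𝓟 S) := hc.mono (principal_mono.2 Set.inter_subset_left)
    have hcpq : c ∈ ({p, q} : Set unitInterval) := by rw [← hxacc]; exact hcS
    have hcIcc : c ∈ Set.Icc a b := by
      have h1 : c ∈ closure (S ∩ Set.Icc a b) :=
        mem_closure_iff_clusterPt.mpr (hc.clusterPt)
      have h2 : closure (S ∩ Set.Icc a b) ⊆ Set.Icc a b :=
        closure_minimal Set.inter_subset_right isClosed_Icc
      exact h2 h1
    rcases hcpq with rfl | rfl
    · exact absurd (lt_of_lt_of_le hpa hcIcc.1) (lt_irrefl _)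
    · exact absurd (lt_of_le_of_lt hcIcc.2 hbq) (lt_irrefl _)
  -- points of S above / below any point of (p,q)
  have habove : ∀ t ∈ Set.Ioo p q, ∃ s ∈ S, t < s := by
    intro t ht
    obtain ⟨s, hs, -⟩ := accPt_iff_nhds.mp haccq (Set.Ioi t) (isOpen_Ioi.mem_nhds ht.2)
    exact ⟨s, hs.2, hs.1⟩
  have hbelow : ∀ t ∈ Set.Ioo p q, ∃ s ∈ S, s < t := by
    intro t ht
    obtain ⟨s, hs, -⟩ := accPt_iff_nhds.mp haccp (Set.Iio t) (isOpen_Iio.mem_nhds ht.1)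
    exact ⟨s, hs.2, hs.1⟩
  -- stabilizer facts
  have hstab : ∀ g ∈ G, ∀ t ∈ Set.Ioo p q, g t ∈ Set.Ioo p q → g p = p ∧ g q = q :=
    fun g hg t ht hgt => gap_rigid hIdisj hpz hqz hg ht hgt
  have hmaps : ∀ g : IntervalHomeo, g p = p → g q = q →
      ∀ t ∈ Set.Ioo p q, g t ∈ Set.Ioo p q := by
    intro g h1 h2 t ht
    exact ⟨h1 ▸ g.strictMono ht.1, h2 ▸ g.strictMono ht.2⟩
  have himgS : ∀ g ∈ G, g p = p → g q = q → ⇑g '' S = S := by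
    intro g hg h1 h2
    rw [hS, Set.image_inter g.injective, orbit_image hg, OrderIso.image_Ioo, h1, h2]
  -- freeness
  have hfree : ∀ g ∈ G, g p = p → g q = q → ∀ t ∈ Set.Ioo p q, g t = t → g = 1 := by
    intro g hg hgp hgq t ht hgt
    -- trapping argument : g fixes every point of S
    have trap : ∀ h : IntervalHomeo, h ∈ G → h p = p → h q = q → h t = t →
        ∀ s ∈ S, s < t → s < h s → False := by
      intro h hh hhp hhq hht s hsS hst hmove
      set u : ℕ → unitInterval := fun n => (h ^ n) s with hu
      have hstep : ∀ n : ℕ, u n < u (n + 1) := by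
        intro n
        induction n with
        | zero =>
            show (h ^ 0) s < (h ^ 1) s
            simpa [pow_zero, pow_one] using hmove
        | succ k ih =>
            have : h (u k) < h (u (k+1)) := h.strictMono ih
            simpa [hu, pow_succ'] using this
      have humono : StrictMono u := strictMono_nat_of_lt_succ hstep
      have huS : ∀ n, u n ∈ S := by
        intro n
        induction n with
        | zero => simpa [hu] using hsS
        | succ k ih =>
            have : h (u k) ∈ ⇑h '' S := Set.mem_image_of_mem _ ih
            rw [himgS h hh hhp hhq] at this
            simpa [hu, pow_succ'] using this
      have hult : ∀ n, u n < t := by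
        intro n
        induction n with
        | zero => simpa [hu] using hst
        | succ k ih =>
            have : h (u k) < h t := h.strictMono ih
            rw [hht] at this
            simpa [hu, pow_succ'] using this
      have hinf2 : (S ∩ Set.Icc s t).Infinite := by
        apply Set.infinite_of_injective_forall_mem humono.injective
        intro n
        refine ⟨huS n, ?_, le_of_lt (hult n)⟩
        have : u 0 ≤ u n := humono.monotone (Nat.zero_le n)
        simpa [hu] using this
      exact (hfin s t (hsS.2.1) ht.2).not_infinite hinf2
    have trap2 : ∀ h : IntervalHomeo, h ∈ G → h p = p → h q = q → h t = t →
        ∀ s ∈ S, t < s → h s < s → False := by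
      intro h hh hhp hhq hht s hsS hst hmove
      set u : ℕ → unitInterval := fun n => (h ^ n) s with hu
      have hstep : ∀ n : ℕ, u (n + 1) < u n := by
        intro n
        induction n with
        | zero =>
            show (h ^ 1) s < (h ^ 0) s
            simpa [pow_zero, pow_one] using hmove
        | succ k ih =>
            have : h (u (k+1)) < h (u k) := h.strictMono ih
            simpa [hu, pow_succ'] using this
      have humono : StrictAnti u := strictAnti_nat_of_succ_lt hstep
      have huS : ∀ n, u n ∈ S := by
        intro n
        induction n with
        | zero => simpa [hu] using hsS
        | succ k ih =>
            have : h (u k) ∈ ⇑h '' S := Set.mem_image_of_mem _ ih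
            rw [himgS h hh hhp hhq] at this
            simpa [hu, pow_succ'] using this
      have hult : ∀ n, t < u n := by
        intro n
        induction n with
        | zero => simpa [hu] using hst
        | succ k ih =>
            have : h t < h (u k) := h.strictMono ih
            rw [hht] at this
            simpa [hu, pow_succ'] using this
      have hinf2 : (S ∩ Set.Icc t s).Infinite := by
        apply Set.infinite_of_injective_forall_mem humono.injective
        intro n
        refine ⟨huS n, le_of_lt (hult n), ?_⟩
        have : u n ≤ u 0 := humono.antitone (Nat.zero_le n)
        simpa [hu] using this
      exact (hfin t s ht.1 (hsS.2.2)).not_infinite hinf2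
    -- g fixes every point of S
    have hfixS : ∀ s ∈ S, g s = s := by
      intro s hsS
      have hginv : g⁻¹ t = t := by
        conv_lhs => rw [← hgt]
        exact g.symm_apply_apply t
      have hginvp : g⁻¹ p = p := by
        conv_lhs => rw [← hgp]
        exact g.symm_apply_apply p
      have hginvq : g⁻¹ q = q := by
        conv_lhs => rw [← hgq]
        exact g.symm_apply_apply q
      rcases lt_trichotomy s t with hlt | heq | hgt'
      · rcases lt_trichotomy (g s) s with h1 | h1 | h1
        · exfalso
          have h2 : s < g⁻¹ s := by
            have h3 := (g⁻¹).strictMono h1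
            rwa [show g⁻¹ (g s) = s from g.symm_apply_apply s] at h3
          exact trap g⁻¹ (inv_mem hg) hginvp hginvq hginv s hsS hlt h2
        · exact h1
        · exact absurd (trap g hg hgp hgq hgt s hsS hlt h1) id
      · rw [heq, hgt]
      · rcases lt_trichotomy (g s) s with h1 | h1 | h1
        · exact absurd (trap2 g hg hgp hgq hgt s hsS hgt' h1) id
        · exact h1
        · exfalso
          have h2 : g⁻¹ s < s := by
            have h3 := (g⁻¹).strictMono h1
            rwa [show g⁻¹ (g s) = s from g.symm_apply_apply s] at h3
          exact trap2 g⁻¹ (inv_mem hg) hginvp hginvq hginv s hsS hgt' h2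
    obtain ⟨F, hF, hFg⟩ := han g hg
    exact eq_one_of_fix_acc hF hFg hfixS (fun s hs => h01 s hs.2) hp haccp
  -- the successor of x in S
  obtain ⟨s₁, hs₁S, hxs₁⟩ := habove x hx
  have hfin1 : (S ∩ Set.Ioc x s₁).Finite :=
    (hfin x s₁ hx.1 hs₁S.2.2).subset
      (fun u hu => ⟨hu.1, le_of_lt hu.2.1, hu.2.2⟩)
  have hne1 : (S ∩ Set.Ioc x s₁).Nonempty := ⟨s₁, hs₁S, hxs₁, le_refl _⟩
  obtain ⟨b, hbmem, hbmin0⟩ := Set.exists_min_image _ id hfin1 hne1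
  have hbS : b ∈ S := hbmem.1
  have hxb : x < b := hbmem.2.1
  have hbmin : ∀ s ∈ S, x < s → b ≤ s := by
    intro s hs hxs
    rcases le_or_gt s s₁ with h | h
    · exact hbmin0 s ⟨hs, hxs, h⟩
    · exact le_trans (le_trans hbmem.2.2 (le_of_lt h)) (le_refl s)
  have hgapxb : ∀ s ∈ S, ¬(x < s ∧ s < b) :=
    fun s hs h => absurd (hbmin s hs h.1) (not_le.2 h.2)
  -- an element h₀ of G sending x to b ; it stabilizes (p,q)
  obtain ⟨h₀, hh₀G, hh₀x⟩ := hbS.1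
  have hh₀xI : h₀ x ∈ Set.Ioo p q := by rw [hh₀x]; exact hbS.2
  obtain ⟨hh₀p, hh₀q⟩ := hstab h₀ hh₀G x hx hh₀xI
  have hh₀ne : h₀ ≠ 1 := by
    intro h
    rw [h] at hh₀x
    exact (ne_of_lt hxb) hh₀x
  -- h₀ moves every point of (p,q) upwards
  have hup : ∀ t ∈ Set.Ioo p q, t < h₀ t := by
    intro t ht
    have hne : ∀ u ∈ Set.Ioo p q, h₀ u ≠ u := by
      intro u hu heq
      exact hh₀ne (hfree h₀ hh₀G hh₀p hh₀q u hu heq)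
    by_contra hle
    push_neg at hle
    have hlt : h₀ t < t := lt_of_le_of_ne hle (hne t ht)
    set f : unitInterval → ℝ := fun u => (h₀ u : ℝ) - (u : ℝ) with hf
    have hcont : ContinuousOn f (Set.Ioo p q) :=
      ((continuous_subtype_val.comp h₀.continuous).sub continuous_subtype_val).continuousOn
    have hpre : IsPreconnected (Set.Ioo p q) := isPreconnected_Ioo
    have hmem0 : (0:ℝ) ∈ Set.Icc (f t) (f x) := by
      constructor
      · have : (↑(h₀ t) : ℝ) < ↑t := hlt
        simp only [hf]
        linarith
      · have : (↑x : ℝ) < ↑b := hxb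
        simp only [hf, hh₀x]
        linarith
    obtain ⟨u, huI, hu0⟩ := hpre.intermediate_value ht hx hcont hmem0
    have : h₀ u = u := by
      apply Subtype.ext
      have : (↑(h₀ u) : ℝ) - ↑u = 0 := hu0
      linarith
    exact hne u huI this
  -- the ℤ-indexed orbit of x under h₀
  set e : ℤ → unitInterval := fun n => (h₀ ^ n) x with he
  have hfixpn : ∀ n : ℤ, (h₀ ^ n) p = p := fun n => zpow_fix hh₀p n
  have hfixqn : ∀ n : ℤ, (h₀ ^ n) q = q := fun n => zpow_fix hh₀q n
  have hmemn : ∀ n : ℤ, e n ∈ Set.Ioo p q := fun n => hmaps _ (hfixpn n) (hfixqn n) x hx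
  have hSn : ∀ n : ℤ, e n ∈ S := fun n => ⟨⟨h₀ ^ n, zpow_mem hh₀G n, rfl⟩, hmemn n⟩
  have he0 : e 0 = x := by
    simp only [he]
    rw [zpow_zero]
    rfl
  have key : ∀ (a c : ℤ), (h₀ ^ a) (e c) = e (a + c) := by
    intro a c
    simp only [he]
    rw [zpow_add]
    rfl
  have hemono : StrictMono e := by
    apply strictMono_int_of_lt_succ
    intro n
    have h1 : e (n + 1) = h₀ (e n) := by
      have h2 := key 1 n
      rw [zpow_one] at h2
      rw [show n + 1 = 1 + n by omega]
      exact h2.symm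
    rw [h1]
    exact hup (e n) (hmemn n)
  -- e is unbounded above and below in (p,q)
  have hexu : ∀ t ∈ Set.Ioo p q, ∃ n : ℤ, t < e n := by
    intro t ht
    by_contra hc
    push_neg at hc
    have hinf2 : (S ∩ Set.Icc x t).Infinite := by
      apply Set.infinite_of_injective_forall_mem (f := fun n : ℕ => e n)
      · intro a c hac
        have := hemono.injective hac
        exact_mod_cast this
      · intro n
        refine ⟨hSn n, ?_, hc n⟩
        have h2 : e 0 ≤ e n := hemono.monotone (by exact_mod_cast Nat.zero_le n)
        rwa [he0] at h2
    exact (hfin x t hx.1 ht.2).not_infinite hinf2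
  have hexd : ∀ t ∈ Set.Ioo p q, ∃ n : ℤ, e n < t := by
    intro t ht
    by_contra hc
    push_neg at hc
    have hinf2 : (S ∩ Set.Icc t x).Infinite := by
      apply Set.infinite_of_injective_forall_mem (f := fun n : ℕ => e (-(n:ℤ)))
      · intro a c hac
        have := hemono.injective hac
        omega
      · intro n
        refine ⟨hSn _, hc _, ?_⟩
        have h2 : e (-(n:ℤ)) ≤ e 0 := hemono.monotone (by omega)
        rwa [he0] at h2
    exact (hfin t x ht.1 hx.2).not_infinite hinf2
  -- greatest index below a point
  have hgreatest : ∀ t ∈ Set.Ioo p q, ∃ n : ℤ, e n ≤ t ∧ t < e (n + 1) := by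
    intro t ht
    obtain ⟨m, hm⟩ := hexu t ht
    obtain ⟨sm, hsm⟩ := hexd t ht
    obtain ⟨n, hn, hmax⟩ := Int.exists_greatest_of_bdd
      (P := fun k => e k ≤ t)
      ⟨m, fun k hk => le_of_lt (hemono.lt_iff_lt.mp (lt_of_le_of_lt hk hm))⟩
      ⟨sm, le_of_lt hsm⟩
    refine ⟨n, hn, ?_⟩
    by_contra hc
    push_neg at hc
    have := hmax (n + 1) hc
    omega
  -- every element of G stabilizing (p,q) is a power of h₀
  have hcyc : ∀ g ∈ G, g p = p → g q = q → ∃ n : ℤ, g = h₀ ^ n := by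
    intro g hg hgp hgq
    have hgxS : g x ∈ S := ⟨⟨g, hg, rfl⟩, hmaps g hgp hgq x hx⟩
    obtain ⟨n, hn1, hn2⟩ := hgreatest (g x) hgxS.2
    set k : IntervalHomeo := (h₀ ^ n)⁻¹ * g with hkdef
    have hkG : k ∈ G := mul_mem (inv_mem (zpow_mem hh₀G n)) hg
    have hkp : k p = p := by
      show (h₀ ^ n)⁻¹ (g p) = p
      rw [hgp]
      exact inv_fix (hfixpn n)
    have hkq : k q = q := by
      show (h₀ ^ n)⁻¹ (g q) = q
      rw [hgq]
      exact inv_fix (hfixqn n)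
    have hkx1 : x ≤ k x := by
      have h1 := ((h₀ ^ n)⁻¹).monotone hn1
      have h2 : (h₀ ^ n)⁻¹ (e n) = x := by
        simp only [he]
        exact (h₀ ^ n).symm_apply_apply x
      rw [h2] at h1
      exact h1
    have hkx2 : k x < b := by
      have h1 := ((h₀ ^ n)⁻¹).strictMono hn2
      have h2 : (h₀ ^ n)⁻¹ (e (n + 1)) = h₀ x := by
        simp only [he]
        have h3 : (h₀ ^ (n + 1)) x = (h₀ ^ n) (h₀ x) := by
          rw [zpow_add_one]
          rfl
        rw [h3]
        exact (h₀ ^ n).symm_apply_apply (h₀ x)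
      rw [h2, hh₀x] at h1
      exact h1
    have hkxS : k x ∈ S := ⟨⟨k, hkG, rfl⟩, hmaps k hkp hkq x hx⟩
    have hkxx : k x = x := by
      rcases eq_or_lt_of_le hkx1 with h | h
      · exact h.symm
      · exact absurd ⟨h, hkx2⟩ (hgapxb (k x) hkxS)
    have hk1 : k = 1 := hfree k hkG hkp hkq x hx hkxx
    refine ⟨n, ?_⟩
    have := inv_mul_eq_one.mp (hkdef ▸ hk1)
    exact this.symm
  -- orbits inside (p,q) are exactly the h₀-orbits
  have horb : ∀ t ∈ Set.Ioo p q, ∀ u, u ∈ orbit G t ∩ Set.Ioo p q ↔ ∃ n : ℤ, (h₀ ^ n) t = u := by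
    intro t ht u
    constructor
    · rintro ⟨⟨g, hg, rfl⟩, hu⟩
      obtain ⟨hgp, hgq⟩ := hstab g hg t ht hu
      obtain ⟨n, rfl⟩ := hcyc g hg hgp hgq
      exact ⟨n, rfl⟩
    · rintro ⟨n, rfl⟩
      exact ⟨⟨h₀ ^ n, zpow_mem hh₀G n, rfl⟩, hmaps _ (hfixpn n) (hfixqn n) t ht⟩
  -- main conclusion
  intro y hy hynO J hJ
  obtain ⟨w, ⟨hwI, hwO⟩, rfl⟩ := hJ
  obtain ⟨k, hk1, hk2⟩ := hgreatest w hwI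
  have hk1' : e k < w := lt_of_le_of_ne hk1 (fun h => hwO (h ▸ (hSn k).1))
  have hJeq : connectedComponentIn (Set.Ioo p q \ orbit G x) w = Set.Ioo (e k) (e (k + 1)) := by
    apply Set.Subset.antisymm
    · intro t htJ
      have hord : (connectedComponentIn (Set.Ioo p q \ orbit G x) w).OrdConnected :=
        (isPreconnected_connectedComponentIn).ordConnected
      have hwJ : w ∈ connectedComponentIn (Set.Ioo p q \ orbit G x) w :=
        mem_connectedComponentIn ⟨hwI, hwO⟩
      by_contra hnot
      rw [Set.mem_Ioo, not_and_or] at hnot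
      rcases hnot with h | h
      · push_neg at h
        have hin : e k ∈ Set.Icc t w := ⟨h, le_of_lt hk1'⟩
        have hekJ := hord.out htJ hwJ hin
        exact (connectedComponentIn_subset _ _ hekJ).2 (hSn k).1
      · push_neg at h
        have hin : e (k + 1) ∈ Set.Icc w t := ⟨le_of_lt hk2, h⟩
        have hekJ := hord.out hwJ htJ hin
        exact (connectedComponentIn_subset _ _ hekJ).2 (hSn (k + 1)).1
    · apply IsPreconnected.subset_connectedComponentIn isPreconnected_Ioo ⟨hk1', hk2⟩
      intro t htI
      have htpq : t ∈ Set.Ioo p q :=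
        ⟨lt_trans (hmemn k).1 htI.1, lt_trans htI.2 (hmemn (k + 1)).2⟩
      refine ⟨htpq, fun hto => ?_⟩
      obtain ⟨m, hm⟩ := (horb x hx t).mp ⟨hto, htpq⟩
      have hm' : e m = t := hm
      have l1 : k < m := hemono.lt_iff_lt.mp (hm' ▸ htI.1)
      have l2 : m < k + 1 := hemono.lt_iff_lt.mp (hm' ▸ htI.2)
      omega
  obtain ⟨m, hm1, hm2⟩ := hgreatest y hy
  have hm1' : e m < y := lt_of_le_of_ne hm1 (fun h => hynO (h ▸ (hSn m).1))
  refine ⟨(h₀ ^ (k - m)) y, ?_⟩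
  rw [hJeq]
  have hbound : ∀ j : ℤ, e (j + m) < (h₀ ^ j) y ∧ (h₀ ^ j) y < e (j + m + 1) := by
    intro j
    constructor
    · have := (h₀ ^ j).strictMono hm1'
      rwa [key j m] at this
    · have := (h₀ ^ j).strictMono hm2
      rw [key j (m + 1)] at this
      have harith : j + (m + 1) = j + m + 1 := by omega
      rwa [harith] at this
  apply Set.eq_singleton_iff_unique_mem.mpr
  constructor
  · refine ⟨⟨h₀ ^ (k - m), zpow_mem hh₀G (k - m), rfl⟩, ?_⟩
    have h1 := hbound (k - m)
    have harith : k - m + m = k := by omega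
    rw [harith] at h1
    exact ⟨h1.1, h1.2⟩
  · intro u hu
    have hupq : u ∈ Set.Ioo p q :=
      ⟨lt_trans (hmemn k).1 hu.2.1, lt_trans hu.2.2 (hmemn (k + 1)).2⟩
    obtain ⟨j, hj⟩ := (horb y hy u).mp ⟨hu.1, hupq⟩
    have h1 := hbound j
    rw [hj] at h1
    have l1 : j + m = k := by
      by_contra hc
      rcases lt_or_gt_of_ne hc with hlt | hgt
      · have : e (j + m + 1) ≤ e k := hemono.monotone (by omega)
        exact absurd (lt_of_lt_of_le h1.2 this) (not_lt.2 (le_of_lt hu.2.1))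
      · have : e (k + 1) ≤ e (j + m) := hemono.monotone (by omega)
        exact absurd (lt_of_le_of_lt this h1.1) (not_lt.2 (le_of_lt hu.2.2))
    have : j = k - m := by omega
    rw [← hj, this]
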